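/- For a > 0, the function ω_a(ξ) = (1 − τ_a(ξ))/ξ, where τ_a is the trapezoid function with parameters a, 2a, satisfies ‖ω_a‖₂² = (4 − 4 ln 2)/a and ‖ω_a'‖₂² = 2/(3a³) (derivative almost everywhere). -/

import Mathlib

open MeasureTheory

/-- The trapezoid function `τ_a`. -/
noncomputable def trap (a ξ : ℝ) : ℝ :=
  if |ξ| ≤ a then 1 else if |ξ| < 2 * a then (2 * a - |ξ|) / a else 0

/-- `ω_a(ξ) = (1 - τ_a(ξ))/ξ`. -/
noncomputable def oma (a ξ : ℝ) : ℝ := (1 - trap a ξ) / ξ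

section OmaHelpers
open Set
variable {a : ℝ}

lemma oma_zero {a : ℝ} {x : ℝ} (hx : |x| ≤ a) : oma a x = 0 := by
  simp [oma, trap, hx]

lemma oma_mid_pos {a : ℝ} (ha : 0 < a) {x : ℝ} (h1 : a ≤ x) (h2 : x ≤ 2 * a) :
    oma a x = 1 / a - 1 / x := by
  have hx0 : 0 < x := lt_of_lt_of_le ha h1
  have hxabs : |x| = x := abs_of_pos hx0
  unfold oma trap
  rw [hxabs]
  rcases eq_or_lt_of_le h1 with h | h
  · rw [if_pos h.symm.le, ← h]
    field_simp
  · rw [if_neg (not_le.2 h)]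
    rcases eq_or_lt_of_le h2 with h' | h'
    · rw [h', if_neg (lt_irrefl _)]
      field_simp
      norm_num
    · rw [if_pos h']
      field_simp
      ring

lemma oma_mid_neg {a : ℝ} (ha : 0 < a) {x : ℝ} (h1 : -(2*a) ≤ x) (h2 : x ≤ -a) :
    oma a x = -(1 / a) - 1 / x := by
  have hx0 : x < 0 := lt_of_le_of_lt h2 (by linarith)
  have hxabs : |x| = -x := abs_of_neg hx0
  unfold oma trap
  rw [hxabs]
  rcases eq_or_lt_of_le h2 with h | h
  · rw [if_pos (by rw [h]; simp), h]
    field_simp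
    norm_num
  · rw [if_neg (by push_neg; linarith)]
    rcases eq_or_lt_of_le h1 with h' | h'
    · rw [← h', if_neg (by simp)]
      field_simp
      norm_num
    · rw [if_pos (by linarith)]
      have ha' : a ≠ 0 := ha.ne'
      have hx' : x ≠ 0 := hx0.ne
      field_simp
      ring

lemma oma_outer {a : ℝ} (ha : 0 < a) {x : ℝ} (hx : 2 * a ≤ |x|) : oma a x = 1 / x := by
  unfold oma trap
  rw [if_neg (by push_neg; linarith), if_neg (not_lt.2 hx)]
  norm_num

lemma oma_neg (a x : ℝ) : oma a (-x) = -oma a x := by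
  unfold oma trap
  rw [abs_neg]
  ring

lemma oma_sq_abs (a x : ℝ) : oma a x ^ 2 = oma a |x| ^ 2 := by
  rcases abs_choice x with h | h
  · rw [h]
  · rw [h, oma_neg, neg_pow]
    simp [pow_succ]

lemma rpow_neg_nat_eq {x : ℝ} (hx : 0 < x) (n : ℕ) : x ^ (-(n:ℝ)) = (x ^ n)⁻¹ := by
  rw [Real.rpow_neg hx.le, Real.rpow_natCast]

lemma int_oma_sq (ha : 0 < a) :
    (∫ ξ : ℝ, (oma a ξ) ^ 2) = (4 - 4 * Real.log 2) / a := by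
  have h2a : (0:ℝ) < 2 * a := by linarith
  -- reduce to Ioi 0
  have habs := integral_comp_abs (f := fun t => oma a t ^ 2)
  rw [show (∫ ξ : ℝ, (oma a ξ) ^ 2) = ∫ ξ : ℝ, oma a |ξ| ^ 2 by simp_rw [← oma_sq_abs],
    habs]
  -- pieces
  have e0 : EqOn (fun x : ℝ => oma a x ^ 2) 0 (Ioc 0 a) := fun x hx => by
    have h : oma a x = 0 := oma_zero (by rw [abs_of_pos hx.1]; exact hx.2)
    simp [h]
  have e2 : EqOn (fun x : ℝ => (1/a - 1/x) ^ 2) (fun x => oma a x ^ 2) (Ioc a (2*a)) :=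
    fun x hx => by simp only; rw [oma_mid_pos ha hx.1.le hx.2]
  have e3 : EqOn (fun x : ℝ => x ^ (-(2:ℕ):ℝ)) (fun x => oma a x ^ 2) (Ioi (2*a)) := by
    intro x hx
    have hx0 : 0 < x := lt_trans h2a hx
    simp only
    rw [oma_outer ha (by rw [abs_of_pos hx0]; exact (le_of_lt hx)), rpow_neg_nat_eq hx0,
      div_pow, one_pow, one_div]
  have cont : ContinuousOn (fun x : ℝ => (1/a - 1/x) ^ 2) (Icc a (2*a)) :=
    ((continuousOn_const.sub (continuousOn_const.div continuousOn_id
      (fun x hx => (lt_of_lt_of_le ha hx.1).ne'))).pow 2)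
  have intZero : IntegrableOn (fun x : ℝ => oma a x ^ 2) (Ioc 0 a) :=
    (integrableOn_zero).congr_fun e0.symm measurableSet_Ioc
  have intMid : IntegrableOn (fun x : ℝ => oma a x ^ 2) (Ioc a (2*a)) :=
    ((cont.integrableOn_Icc).mono_set Ioc_subset_Icc_self).congr_fun e2 measurableSet_Ioc
  have intOut : IntegrableOn (fun x : ℝ => oma a x ^ 2) (Ioi (2*a)) :=
    (integrableOn_Ioi_rpow_of_lt (by norm_num) h2a).congr_fun e3 measurableSet_Ioi
  have disj1 : Disjoint (Ioc (0:ℝ) a) (Ioc a (2*a)) :=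
    (Iic_disjoint_Ioi le_rfl).mono Ioc_subset_Iic_self Ioc_subset_Ioi_self
  have disj2 : Disjoint (Ioc (0:ℝ) (2*a)) (Ioi (2*a)) := Ioc_disjoint_Ioi le_rfl
  have intIoc : IntegrableOn (fun x : ℝ => oma a x ^ 2) (Ioc 0 (2*a)) := by
    rw [← Ioc_union_Ioc_eq_Ioc ha.le (by linarith : a ≤ 2*a)]
    exact intZero.union intMid
  -- split the integral
  rw [← Ioc_union_Ioi_eq_Ioi h2a.le,
    setIntegral_union disj2 measurableSet_Ioi intIoc intOut,
    ← Ioc_union_Ioc_eq_Ioc ha.le (by linarith : a ≤ 2*a),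
    setIntegral_union disj1 measurableSet_Ioc intZero intMid]
  -- evaluate the three pieces
  have v0 : ∫ x in Ioc (0:ℝ) a, oma a x ^ 2 = 0 := by
    rw [setIntegral_congr_fun measurableSet_Ioc e0]; simp
  have vOut : ∫ x in Ioi (2*a), oma a x ^ 2 = (2*a)⁻¹ := by
    rw [← setIntegral_congr_fun measurableSet_Ioi e3,
      integral_Ioi_rpow_of_lt (by norm_num) h2a,
      show (-(2:ℕ):ℝ)+1 = -1 by norm_num, Real.rpow_neg_one]
    norm_num
  have vMid : ∫ x in Ioc a (2*a), oma a x ^ 2 = (3/2 - 2 * Real.log 2) / a := by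
    rw [← setIntegral_congr_fun measurableSet_Ioc e2,
      ← intervalIntegral.integral_of_le (by linarith : a ≤ 2*a)]
    have hderiv : ∀ x ∈ uIcc a (2*a),
        HasDerivAt (fun x : ℝ => x / a^2 - 2/a * Real.log x - x⁻¹) ((1/a - 1/x)^2) x := by
      intro x hx
      rw [uIcc_of_le (by linarith : a ≤ 2*a)] at hx
      have hx0 : 0 < x := lt_of_lt_of_le ha hx.1
      have h := (((hasDerivAt_id x).div_const (a^2)).sub
        ((Real.hasDerivAt_log hx0.ne').const_mul (2/a))).sub (hasDerivAt_inv hx0.ne')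
      refine h.congr_deriv ?_
      have hane : a ≠ 0 := ha.ne'
      have hxne : x ≠ 0 := hx0.ne'
      field_simp
      ring
    have hint : IntervalIntegrable (fun x : ℝ => (1/a - 1/x)^2) volume a (2*a) := by
      apply ContinuousOn.intervalIntegrable
      rw [uIcc_of_le (by linarith : a ≤ 2*a)]
      exact cont
    rw [intervalIntegral.integral_eq_sub_of_hasDerivAt hderiv hint]
    have hlog : Real.log (2*a) = Real.log 2 + Real.log a :=
      Real.log_mul two_ne_zero ha.ne'
    rw [hlog]
    have hane : a ≠ 0 := ha.ne'
    field_simp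
    ring
  rw [v0, vOut, vMid]
  have hane : a ≠ 0 := ha.ne'
  field_simp
  ring

lemma gsq_ae {a : ℝ} (ha : 0 < a) (g : ℝ → ℝ)
    (hg : ∀ᵐ ξ ∂(volume : Measure ℝ), HasDerivAt (oma a) (g ξ) ξ) :
    (fun ξ => g ξ ^ 2) =ᵐ[volume]
      (fun ξ => (fun t => if t ≤ a then 0 else (t^4)⁻¹) |ξ|) := by
  have hS : (volume : Measure ℝ) ({-(2*a), -a, a, 2*a} : Set ℝ) = 0 :=
    Set.Countable.measure_zero (Set.to_countable _) _
  filter_upwards [hg, measure_eq_zero_iff_ae_notMem.mp hS] with ξ hξ hmem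
  simp only [mem_insert_iff, mem_singleton_iff, not_or] at hmem
  obtain ⟨hm1, hm2, hm3, hm4⟩ := hmem
  show g ξ ^ 2 = if |ξ| ≤ a then 0 else (|ξ|^4)⁻¹
  have habs_a : |ξ| ≠ a := fun h => by
    rcases abs_eq ha.le |>.mp h with h' | h' <;> simp_all
  have habs_2a : |ξ| ≠ 2*a := fun h => by
    rcases abs_eq (by linarith : (0:ℝ) ≤ 2*a) |>.mp h with h' | h' <;> simp_all
  rcases lt_trichotomy |ξ| a with hlt | heq | hgt
  · -- |ξ| < a : derivative 0
    have hev : oma a =ᶠ[nhds ξ] fun _ => 0 := by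
      have hU : IsOpen {x : ℝ | |x| < a} := isOpen_Iio.preimage continuous_abs
      exact Filter.eventually_of_mem (hU.mem_nhds hlt) fun x hx => oma_zero (le_of_lt hx)
    have hd : HasDerivAt (oma a) 0 ξ := (hasDerivAt_const ξ 0).congr_of_eventuallyEq hev
    rw [hξ.unique hd, if_pos hlt.le]
    norm_num
  · exact absurd heq habs_a
  · -- a < |ξ|
    have hne : ξ ≠ 0 := fun h => by rw [h, abs_zero] at hgt; linarith
    have h4 : |ξ|^4 = ξ^4 := by rcases abs_choice ξ with h | h <;> rw [h] <;> ring
    have hpow : (|ξ|^4)⁻¹ = (ξ^2)⁻¹ ^ 2 := by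
      rw [h4, inv_pow, ← pow_mul]
    rw [if_neg (not_le.2 hgt)]
    rcases lt_trichotomy |ξ| (2*a) with h2lt | h2eq | h2gt
    · -- middle region : derivative ξ⁻²
      have hd : HasDerivAt (oma a) ((ξ^2)⁻¹) ξ := by
        rcases lt_or_ge 0 ξ with hpos | hneg
        · have hξabs : |ξ| = ξ := abs_of_pos hpos
          have hev : oma a =ᶠ[nhds ξ] fun x => 1/a - 1/x := by
            refine Filter.eventually_of_mem (isOpen_Ioo.mem_nhds ?_) fun x hx =>
              oma_mid_pos ha hx.1.le hx.2.le
            exact ⟨by rw [← hξabs]; exact hgt, by rw [← hξabs]; exact h2lt⟩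
          have hd' : HasDerivAt (fun x : ℝ => 1/a - 1/x) ((ξ^2)⁻¹) ξ := by
            simpa [one_div, Pi.sub_def] using (hasDerivAt_const ξ (1/a)).sub (hasDerivAt_inv hne)
          exact hd'.congr_of_eventuallyEq hev
        · have hneg' : ξ < 0 := lt_of_le_of_ne hneg hne
          have hξabs : |ξ| = -ξ := abs_of_neg hneg'
          have hev : oma a =ᶠ[nhds ξ] fun x => -(1/a) - 1/x := by
            refine Filter.eventually_of_mem (isOpen_Ioo.mem_nhds ?_) fun x hx =>
              oma_mid_neg ha hx.1.le hx.2.le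
            rw [hξabs] at hgt h2lt
            exact ⟨by linarith, by linarith⟩
          have hd' : HasDerivAt (fun x : ℝ => -(1/a) - 1/x) ((ξ^2)⁻¹) ξ := by
            simpa [one_div, Pi.sub_def] using (hasDerivAt_const ξ (-(1/a))).sub (hasDerivAt_inv hne)
          exact hd'.congr_of_eventuallyEq hev
      rw [hξ.unique hd, hpow]
    · exact absurd h2eq habs_2a
    · -- outer region : derivative -ξ⁻²
      have hev : oma a =ᶠ[nhds ξ] fun x => 1/x := by
        have hU : IsOpen {x : ℝ | 2*a < |x|} := isOpen_Ioi.preimage continuous_abs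
        exact Filter.eventually_of_mem (hU.mem_nhds h2gt) fun x hx => oma_outer ha (le_of_lt hx)
      have hd' : HasDerivAt (fun x : ℝ => 1/x) (-(ξ^2)⁻¹) ξ := by
        simpa [one_div] using hasDerivAt_inv hne
      have hd : HasDerivAt (oma a) (-(ξ^2)⁻¹) ξ := hd'.congr_of_eventuallyEq hev
      rw [hξ.unique hd, hpow, neg_pow]
      norm_num

lemma int_gsq {a : ℝ} (ha : 0 < a) (g : ℝ → ℝ)
    (hg : ∀ᵐ ξ ∂(volume : Measure ℝ), HasDerivAt (oma a) (g ξ) ξ) :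
    (∫ ξ : ℝ, (g ξ) ^ 2) = 2 / (3 * a ^ 3) := by
  rw [integral_congr_ae (gsq_ae ha g hg)]
  have habs := integral_comp_abs (f := fun t : ℝ => if t ≤ a then 0 else (t^4)⁻¹)
  rw [habs]
  have e0 : EqOn (fun t : ℝ => if t ≤ a then 0 else (t^4)⁻¹) 0 (Ioc 0 a) :=
    fun x hx => by simp only [if_pos hx.2]; rfl
  have e1 : EqOn (fun x : ℝ => x ^ (-(4:ℕ):ℝ))
      (fun t : ℝ => if t ≤ a then 0 else (t^4)⁻¹) (Ioi a) := fun x hx => by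
    have hx0 : 0 < x := lt_trans ha hx
    simp only [if_neg (not_le.2 (mem_Ioi.mp hx))]
    exact rpow_neg_nat_eq hx0 4
  have intZero : IntegrableOn (fun t : ℝ => if t ≤ a then 0 else (t^4)⁻¹) (Ioc 0 a) :=
    (integrableOn_zero).congr_fun e0.symm measurableSet_Ioc
  have intOut : IntegrableOn (fun t : ℝ => if t ≤ a then 0 else (t^4)⁻¹) (Ioi a) :=
    (integrableOn_Ioi_rpow_of_lt (by norm_num) ha).congr_fun e1 measurableSet_Ioi
  rw [← Ioc_union_Ioi_eq_Ioi ha.le,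
    setIntegral_union (Ioc_disjoint_Ioi le_rfl) measurableSet_Ioi intZero intOut,
    setIntegral_congr_fun measurableSet_Ioc e0,
    ← setIntegral_congr_fun measurableSet_Ioi e1,
    integral_Ioi_rpow_of_lt (by norm_num) ha,
    show (-(4:ℕ):ℝ)+1 = -(3:ℕ) by norm_num, rpow_neg_nat_eq ha 3]
  simp only [Pi.zero_apply, integral_zero]
  have hane : a ≠ 0 := ha.ne'
  field_simp
  ring

end OmaHelpers

/-- `‖ω_a‖₂² = (4 - 4 ln 2)/a` and `‖ω_a'‖₂² = 2/(3a³)` for any a.e. derivative of `ω_a`. -/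
theorem stmt5 (a : ℝ) (ha : 0 < a) (g : ℝ → ℝ)
    (hg : ∀ᵐ ξ ∂(volume : Measure ℝ), HasDerivAt (oma a) (g ξ) ξ) :
    (∫ ξ : ℝ, (oma a ξ) ^ 2) = (4 - 4 * Real.log 2) / a ∧
      (∫ ξ : ℝ, (g ξ) ^ 2) = 2 / (3 * a ^ 3) := by
  exact ⟨int_oma_sq ha, int_gsq ha g hg⟩
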